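/- For every α ∈ (0,2] there exists c > 0 such that for all t ∈ (0, π/6] and all z = (z₁,z₂) ∈ ℝ² with |z₂| ≤ (t/2)|z₁|, one has ∫_{−t}^{0} |z₁ sin r + z₂ cos r|^{α} dr ≥ c t^{1+α} |z₁|^{α}. -/

import Mathlib

open Real

/-- For `α ∈ (0,2]` there is `c > 0` such that for all `t ∈ (0, π/6]`
and all `(z₁,z₂) ∈ ℝ²` with `|z₂| ≤ (t/2)|z₁|`,
`∫_{−t}^{0} |z₁ sin r + z₂ cos r|^α dr ≥ c t^{1+α} |z₁|^α`. -/
theorem stmt16 (α : ℝ) (hα : 0 < α) (hα' : α ≤ 2) :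
    ∃ c > 0, ∀ t : ℝ, 0 < t → t ≤ π / 6 → ∀ z₁ z₂ : ℝ, |z₂| ≤ t / 2 * |z₁| →
      c * t ^ (1 + α) * |z₁| ^ α ≤
        ∫ r in (-t)..(0:ℝ), |z₁ * Real.sin r + z₂ * Real.cos r| ^ α := by
  refine ⟨(1/8 : ℝ) ^ α / 4, by positivity, ?_⟩
  intro t ht ht' z₁ z₂ hz
  have hπ : π ≤ 3.15 := le_of_lt Real.pi_lt_d2
  have ht1 : t ≤ 1 := by nlinarith
  set f := fun r : ℝ => |z₁ * Real.sin r + z₂ * Real.cos r| ^ α with hf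
  have hcont : Continuous f := by
    apply Continuous.rpow_const
    · exact (continuous_abs.comp (by continuity))
    · intro x; right; exact hα.le
  have hmid : -t ≤ -(3*t/4) := by linarith
  have key : ∀ r ∈ Set.Icc (-t) (-(3*t/4)), (t/8 * |z₁|) ^ α ≤ f r := by
    intro r hr
    have hr1 : -t ≤ r := hr.1
    have hr2 : r ≤ -(3*t/4) := hr.2
    have hx0 : 0 < -r := by linarith
    have hx1 : -r ≤ 1 := by linarith
    have hsin := Real.sin_gt_sub_cube hx0
    have hsinr : 5*t/8 ≤ Real.sin (-r) := by nlinarith [sq_nonneg (-r), sq_nonneg t]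
    have hsinpos : 0 ≤ Real.sin (-r) := by linarith [ht]
    have habs : |z₁ * Real.sin r| = |z₁| * Real.sin (-r) := by
      rw [abs_mul]
      congr 1
      rw [show Real.sin r = -Real.sin (-r) by rw [Real.sin_neg]; ring,
        abs_neg, abs_of_nonneg hsinpos]
    have hcos : |z₂ * Real.cos r| ≤ t/2 * |z₁| := by
      rw [abs_mul]
      calc |z₂| * |Real.cos r| ≤ |z₂| * 1 := by
            exact mul_le_mul_of_nonneg_left (Real.abs_cos_le_one r) (abs_nonneg _)
        _ ≤ t/2 * |z₁| := by rw [mul_one]; exact hz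
    have hlow : t/8 * |z₁| ≤ |z₁ * Real.sin r + z₂ * Real.cos r| := by
      have h1 : |z₁ * Real.sin r| - |z₂ * Real.cos r| ≤ |z₁ * Real.sin r + z₂ * Real.cos r| := by
        have := abs_add_le (z₁ * Real.sin r + z₂ * Real.cos r) (-(z₂ * Real.cos r))
        simp only [add_neg_cancel_right, abs_neg] at this
        linarith
      have h2 : 5*t/8 * |z₁| ≤ |z₁ * Real.sin r| := by
        rw [habs]
        calc 5*t/8 * |z₁| = |z₁| * (5*t/8) := by ring
          _ ≤ |z₁| * Real.sin (-r) := mul_le_mul_of_nonneg_left hsinr (abs_nonneg _)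
      linarith
    exact Real.rpow_le_rpow (by positivity) hlow hα.le
  have hint1 : IntervalIntegrable f MeasureTheory.volume (-t) (-(3*t/4)) :=
    hcont.intervalIntegrable _ _
  have hint2 : IntervalIntegrable f MeasureTheory.volume (-(3*t/4)) 0 :=
    hcont.intervalIntegrable _ _
  have hsplit := intervalIntegral.integral_add_adjacent_intervals hint1 hint2
  have h2 : 0 ≤ ∫ r in (-(3*t/4))..(0:ℝ), f r :=
    intervalIntegral.integral_nonneg (by linarith) (fun r _ => by positivity)
  have h1 : t/4 * (t/8*|z₁|)^α ≤ ∫ r in (-t)..(-(3*t/4)), f r := by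
    have hmono := intervalIntegral.integral_mono_on hmid
      (intervalIntegrable_const) hint1 key
    rw [intervalIntegral.integral_const, show (-(3*t/4) - -t) = t/4 by ring,
      smul_eq_mul] at hmono
    exact hmono
  have heq : (1/8:ℝ)^α/4 * t ^ (1+α) * |z₁|^α = t/4 * (t/8*|z₁|)^α := by
    rw [Real.rpow_add ht, Real.rpow_one, Real.mul_rpow (by positivity) (abs_nonneg _),
        show t/8 = t*(1/8) by ring, Real.mul_rpow ht.le (by norm_num)]
    ring
  rw [heq]
  linarith [hsplit, h1, h2]
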